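/- Let G₁ and G₂ be finite simple graphs of orders n₁, n₂ and sizes m₁, m₂, with maximum degrees Δ₁, Δ₂ and minimum degrees δ₁, δ₂. Then the Euler Sombor index of the join satisfies √3·m₁·(δ₁+n₂) + √3·m₂·(δ₂+n₁) + n₁n₂·√((δ₁+n₂)² + (δ₂+n₁)² + (δ₁+n₂)(δ₂+n₁)) ≤ EU(G₁+G₂) ≤ √3·m₁·(Δ₁+n₂) + √3·m₂·(Δ₂+n₁) + n₁n₂·√((Δ₁+n₂)² + (Δ₂+n₁)² + (Δ₁+n₂)(Δ₂+n₁)). -/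

import Mathlib

open Finset SimpleGraph
open scoped Classical

noncomputable def ESO {V : Type*} [Fintype V] (G : SimpleGraph V) : Real :=
  Finset.sum G.edgeSet.toFinset fun e =>
    Sym2.lift ⟨fun u v => ((G.degree u : Real) + (G.degree v : Real)) *
        Real.sqrt ((G.degree u : Real) ^ 2 + (G.degree v : Real) ^ 2),
      fun u v => by
        dsimp only; rw [add_comm (G.degree u : Real), add_comm ((G.degree u : Real) ^ 2)]⟩ e

noncomputable def EU {V : Type*} [Fintype V] (G : SimpleGraph V) : Real :=
  Finset.sum G.edgeSet.toFinset fun e =>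
    Sym2.lift ⟨fun u v => Real.sqrt ((G.degree u : Real) ^ 2 + (G.degree v : Real) ^ 2 +
        (G.degree u : Real) * (G.degree v : Real)),
      fun u v => by
        dsimp only; rw [mul_comm (G.degree u : Real), add_comm ((G.degree u : Real) ^ 2)]⟩ e

noncomputable def edgeCount {V : Type*} [Fintype V] (G : SimpleGraph V) : Nat :=
  G.edgeSet.toFinset.card

def graphJoin {V1 V2 : Type*} (G1 : SimpleGraph V1) (G2 : SimpleGraph V2) :
    SimpleGraph (V1 ⊕ V2) where
  Adj x y :=
    match x, y with
    | Sum.inl a, Sum.inl b => G1.Adj a b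
    | Sum.inr a, Sum.inr b => G2.Adj a b
    | Sum.inl _, Sum.inr _ => True
    | Sum.inr _, Sum.inl _ => True
  symm := by
    constructor
    rintro (a | a) (b | b) h
    · exact G1.adj_symm h
    · trivial
    · trivial
    · exact G2.adj_symm h
  loopless := by
    constructor
    rintro (a | a) h
    · exact G1.loopless.irrefl a h
    · exact G2.loopless.irrefl a h

section Aux

variable {V1 V2 : Type*} [Fintype V1] [Fintype V2] (G1 : SimpleGraph V1) (G2 : SimpleGraph V2)

lemma degree_join_inl (a : V1) :
    (graphJoin G1 G2).degree (Sum.inl a) = G1.degree a + Fintype.card V2 := by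
  rw [← card_neighborSet_eq_degree, ← card_neighborSet_eq_degree]
  have e : (graphJoin G1 G2).neighborSet (Sum.inl a) ≃ G1.neighborSet a ⊕ V2 :=
    Equiv.subtypeSum.trans (Equiv.sumCongr (Equiv.refl _)
      (Equiv.subtypeUnivEquiv (fun b => trivial)))
  rw [Fintype.card_congr e, Fintype.card_sum]

lemma degree_join_inr (b : V2) :
    (graphJoin G1 G2).degree (Sum.inr b) = G2.degree b + Fintype.card V1 := by
  rw [← card_neighborSet_eq_degree, ← card_neighborSet_eq_degree]
  have e : (graphJoin G1 G2).neighborSet (Sum.inr b) ≃ V1 ⊕ G2.neighborSet b :=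
    Equiv.subtypeSum.trans (Equiv.sumCongr (Equiv.subtypeUnivEquiv (fun b => trivial))
      (Equiv.refl _))
  rw [Fintype.card_congr e, Fintype.card_sum, add_comm]

lemma edgeSet_join :
    (graphJoin G1 G2).edgeSet.toFinset =
      (G1.edgeSet.toFinset.image (Sym2.map Sum.inl) ∪
       G2.edgeSet.toFinset.image (Sym2.map Sum.inr)) ∪
      ((Finset.univ : Finset (V1 × V2)).image (fun p => s(Sum.inl p.1, Sum.inr p.2))) := by
  ext e
  induction e using Sym2.ind with
  | _ x y =>
    rcases x with x | x <;> rcases y with y | y <;>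
      rw [Set.mem_toFinset, mem_edgeSet] <;>
      simp [graphJoin, Sym2.exists, Sym2.map_pair_eq, Sym2.eq_iff, mem_edgeSet] <;>
      (constructor
       · intro h; exact ⟨_, _, h, Or.inl ⟨rfl, rfl⟩⟩
       · rintro ⟨u, v, h, (⟨rfl, rfl⟩ | ⟨rfl, rfl⟩)⟩
         · exact h
         · exact h.symm)

lemma sum_edges_join (f : Sym2 (V1 ⊕ V2) → ℝ) :
    ∑ e ∈ (graphJoin G1 G2).edgeSet.toFinset, f e =
      (∑ e ∈ G1.edgeSet.toFinset, f (Sym2.map Sum.inl e)) +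
      (∑ e ∈ G2.edgeSet.toFinset, f (Sym2.map Sum.inr e)) +
      (∑ p : V1 × V2, f s(Sum.inl p.1, Sum.inr p.2)) := by
  rw [edgeSet_join]
  have hAB : Disjoint (G1.edgeSet.toFinset.image (Sym2.map Sum.inl))
      (G2.edgeSet.toFinset.image (Sym2.map Sum.inr)) := by
    rw [Finset.disjoint_left]
    rintro e he he'
    simp only [Finset.mem_image, Sym2.exists, Sym2.map_pair_eq] at he he'
    obtain ⟨u, v, -, rfl⟩ := he
    obtain ⟨u', v', -, h⟩ := he'
    rw [Sym2.eq_iff] at h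
    rcases h with ⟨h, -⟩ | ⟨h, -⟩ <;> exact absurd h (by simp)
  have hABC : Disjoint (G1.edgeSet.toFinset.image (Sym2.map Sum.inl) ∪
      G2.edgeSet.toFinset.image (Sym2.map Sum.inr))
      ((Finset.univ : Finset (V1 × V2)).image (fun p => s(Sum.inl p.1, Sum.inr p.2))) := by
    rw [Finset.disjoint_left]
    rintro e he he'
    simp only [Finset.mem_image, Finset.mem_union, Sym2.exists, Sym2.map_pair_eq,
      Prod.exists, Finset.mem_univ, true_and] at he he'
    obtain ⟨a, b, h⟩ := he'
    rcases he with ⟨u, v, -, rfl⟩ | ⟨u, v, -, rfl⟩ <;> rw [Sym2.eq_iff] at h <;>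
      rcases h with ⟨h1, h2⟩ | ⟨h1, h2⟩ <;> simp_all
  rw [Finset.sum_union hABC, Finset.sum_union hAB]
  congr 1
  · congr 1
    · exact Finset.sum_image (fun x _ y _ h =>
        Sym2.map.injective Sum.inl_injective h)
    · exact Finset.sum_image (fun x _ y _ h =>
        Sym2.map.injective Sum.inr_injective h)
  · refine Finset.sum_image ?_
    rintro ⟨a, b⟩ - ⟨a', b'⟩ - h
    rw [Sym2.eq_iff] at h
    rcases h with ⟨h1, h2⟩ | ⟨h1, h2⟩
    · simp_all
    · exact absurd h1 (by simp)

lemma sqrt3_mul_le {c x y : ℝ} (hc : 0 ≤ c) (hx : c ≤ x) (hy : c ≤ y) :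
    Real.sqrt 3 * c ≤ Real.sqrt (x ^ 2 + y ^ 2 + x * y) := by
  have : Real.sqrt 3 * c = Real.sqrt (3 * c ^ 2) := by
    rw [Real.sqrt_mul (by norm_num), Real.sqrt_sq hc]
  rw [this]
  exact Real.sqrt_le_sqrt (by nlinarith)

lemma le_sqrt3_mul {c x y : ℝ} (hx0 : 0 ≤ x) (hy0 : 0 ≤ y) (hx : x ≤ c) (hy : y ≤ c) :
    Real.sqrt (x ^ 2 + y ^ 2 + x * y) ≤ Real.sqrt 3 * c := by
  have hc : 0 ≤ c := le_trans hx0 hx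
  have : Real.sqrt 3 * c = Real.sqrt (3 * c ^ 2) := by
    rw [Real.sqrt_mul (by norm_num), Real.sqrt_sq hc]
  rw [this]
  exact Real.sqrt_le_sqrt (by nlinarith)

lemma sqrt_mono {x y x' y' : ℝ} (hx0 : 0 ≤ x) (hy0 : 0 ≤ y) (hx : x ≤ x') (hy : y ≤ y') :
    Real.sqrt (x ^ 2 + y ^ 2 + x * y) ≤ Real.sqrt (x' ^ 2 + y' ^ 2 + x' * y') :=
  Real.sqrt_le_sqrt (by nlinarith)

lemma sqrt_mono' {x y x' y' : ℝ} (hx0 : 0 ≤ x') (hy0 : 0 ≤ y') (hx : x' ≤ x) (hy : y' ≤ y) :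
    Real.sqrt (x' ^ 2 + y' ^ 2 + x' * y') ≤ Real.sqrt (x ^ 2 + y ^ 2 + x * y) :=
  sqrt_mono hx0 hy0 hx hy

end Aux

theorem eu_join_bounds {V1 V2 : Type*} [Fintype V1] [Fintype V2]
    (G1 : SimpleGraph V1) (G2 : SimpleGraph V2) :
    Real.sqrt 3 * (edgeCount G1 : Real) * ((G1.minDegree : Real) + Fintype.card V2) +
      Real.sqrt 3 * (edgeCount G2 : Real) * ((G2.minDegree : Real) + Fintype.card V1) +
      (Fintype.card V1 : Real) * (Fintype.card V2 : Real) *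
        Real.sqrt (((G1.minDegree : Real) + Fintype.card V2) ^ 2 +
          ((G2.minDegree : Real) + Fintype.card V1) ^ 2 +
          ((G1.minDegree : Real) + Fintype.card V2) * ((G2.minDegree : Real) + Fintype.card V1))
      ≤ EU (graphJoin G1 G2) ∧
    EU (graphJoin G1 G2) ≤
      Real.sqrt 3 * (edgeCount G1 : Real) * ((G1.maxDegree : Real) + Fintype.card V2) +
      Real.sqrt 3 * (edgeCount G2 : Real) * ((G2.maxDegree : Real) + Fintype.card V1) +
      (Fintype.card V1 : Real) * (Fintype.card V2 : Real) *
        Real.sqrt (((G1.maxDegree : Real) + Fintype.card V2) ^ 2 +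
          ((G2.maxDegree : Real) + Fintype.card V1) ^ 2 +
          ((G1.maxDegree : Real) + Fintype.card V2) * ((G2.maxDegree : Real) + Fintype.card V1)) := by
  set n1 : ℝ := (Fintype.card V1 : ℝ) with hn1
  set n2 : ℝ := (Fintype.card V2 : ℝ) with hn2
  have hEU : EU (graphJoin G1 G2) =
      (∑ e ∈ G1.edgeSet.toFinset,
        Sym2.lift ⟨fun u v =>
          Real.sqrt (((G1.degree u : ℝ) + n2) ^ 2 + ((G1.degree v : ℝ) + n2) ^ 2 +
            ((G1.degree u : ℝ) + n2) * ((G1.degree v : ℝ) + n2)),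
          fun u v => by dsimp only; ring_nf⟩ e) +
      (∑ e ∈ G2.edgeSet.toFinset,
        Sym2.lift ⟨fun u v =>
          Real.sqrt (((G2.degree u : ℝ) + n1) ^ 2 + ((G2.degree v : ℝ) + n1) ^ 2 +
            ((G2.degree u : ℝ) + n1) * ((G2.degree v : ℝ) + n1)),
          fun u v => by dsimp only; ring_nf⟩ e) +
      (∑ p : V1 × V2,
        Real.sqrt (((G1.degree p.1 : ℝ) + n2) ^ 2 + ((G2.degree p.2 : ℝ) + n1) ^ 2 +
          ((G1.degree p.1 : ℝ) + n2) * ((G2.degree p.2 : ℝ) + n1))) := by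
    rw [EU, sum_edges_join]
    congr 1
    · congr 1
      · refine Finset.sum_congr rfl fun e _ => ?_
        induction e using Sym2.ind with
        | _ u v =>
          rw [Sym2.map_pair_eq, Sym2.lift_mk, Sym2.lift_mk]
          simp [degree_join_inl, hn2]
      · refine Finset.sum_congr rfl fun e _ => ?_
        induction e using Sym2.ind with
        | _ u v =>
          rw [Sym2.map_pair_eq, Sym2.lift_mk, Sym2.lift_mk]
          simp [degree_join_inr, hn1]
    · refine Finset.sum_congr rfl fun p _ => ?_
      rw [Sym2.lift_mk]
      simp [degree_join_inl, degree_join_inr, hn1, hn2]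
  constructor
  · rw [hEU]
    refine add_le_add (add_le_add ?_ ?_) ?_
    · have h : Real.sqrt 3 * (edgeCount G1 : ℝ) * ((G1.minDegree : ℝ) + n2) =
          G1.edgeSet.toFinset.card • (Real.sqrt 3 * ((G1.minDegree : ℝ) + n2)) := by
        rw [nsmul_eq_mul, edgeCount]; ring
      rw [h]
      refine Finset.card_nsmul_le_sum _ _ _ fun e he => ?_
      induction e using Sym2.ind with
      | _ u v =>
        rw [Sym2.lift_mk]
        refine sqrt3_mul_le (by positivity) ?_ ?_ <;>
          exact add_le_add (Nat.cast_le.2 (G1.minDegree_le_degree _)) le_rfl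
    · have h : Real.sqrt 3 * (edgeCount G2 : ℝ) * ((G2.minDegree : ℝ) + n1) =
          G2.edgeSet.toFinset.card • (Real.sqrt 3 * ((G2.minDegree : ℝ) + n1)) := by
        rw [nsmul_eq_mul, edgeCount]; ring
      rw [h]
      refine Finset.card_nsmul_le_sum _ _ _ fun e he => ?_
      induction e using Sym2.ind with
      | _ u v =>
        rw [Sym2.lift_mk]
        refine sqrt3_mul_le (by positivity) ?_ ?_ <;>
          exact add_le_add (Nat.cast_le.2 (G2.minDegree_le_degree _)) le_rfl
    · have h : n1 * n2 * Real.sqrt (((G1.minDegree : ℝ) + n2) ^ 2 +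
          ((G2.minDegree : ℝ) + n1) ^ 2 +
          ((G1.minDegree : ℝ) + n2) * ((G2.minDegree : ℝ) + n1)) =
          (Finset.univ : Finset (V1 × V2)).card •
            Real.sqrt (((G1.minDegree : ℝ) + n2) ^ 2 + ((G2.minDegree : ℝ) + n1) ^ 2 +
              ((G1.minDegree : ℝ) + n2) * ((G2.minDegree : ℝ) + n1)) := by
        rw [nsmul_eq_mul, Finset.card_univ, Fintype.card_prod, Nat.cast_mul]
      rw [h]
      refine Finset.card_nsmul_le_sum _ _ _ fun p _ => ?_
      refine sqrt_mono' (by positivity) (by positivity) ?_ ?_ <;>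
        exact add_le_add (Nat.cast_le.2 (minDegree_le_degree _ _)) le_rfl
  · rw [hEU]
    refine add_le_add (add_le_add ?_ ?_) ?_
    · have h : Real.sqrt 3 * (edgeCount G1 : ℝ) * ((G1.maxDegree : ℝ) + n2) =
          G1.edgeSet.toFinset.card • (Real.sqrt 3 * ((G1.maxDegree : ℝ) + n2)) := by
        rw [nsmul_eq_mul, edgeCount]; ring
      rw [h]
      refine Finset.sum_le_card_nsmul _ _ _ fun e he => ?_
      induction e using Sym2.ind with
      | _ u v =>
        rw [Sym2.lift_mk]
        refine le_sqrt3_mul (by positivity) (by positivity) ?_ ?_ <;>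
          exact add_le_add (Nat.cast_le.2 (G1.degree_le_maxDegree _)) le_rfl
    · have h : Real.sqrt 3 * (edgeCount G2 : ℝ) * ((G2.maxDegree : ℝ) + n1) =
          G2.edgeSet.toFinset.card • (Real.sqrt 3 * ((G2.maxDegree : ℝ) + n1)) := by
        rw [nsmul_eq_mul, edgeCount]; ring
      rw [h]
      refine Finset.sum_le_card_nsmul _ _ _ fun e he => ?_
      induction e using Sym2.ind with
      | _ u v =>
        rw [Sym2.lift_mk]
        refine le_sqrt3_mul (by positivity) (by positivity) ?_ ?_ <;>
          exact add_le_add (Nat.cast_le.2 (G2.degree_le_maxDegree _)) le_rfl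
    · have h : n1 * n2 * Real.sqrt (((G1.maxDegree : ℝ) + n2) ^ 2 +
          ((G2.maxDegree : ℝ) + n1) ^ 2 +
          ((G1.maxDegree : ℝ) + n2) * ((G2.maxDegree : ℝ) + n1)) =
          (Finset.univ : Finset (V1 × V2)).card •
            Real.sqrt (((G1.maxDegree : ℝ) + n2) ^ 2 + ((G2.maxDegree : ℝ) + n1) ^ 2 +
              ((G1.maxDegree : ℝ) + n2) * ((G2.maxDegree : ℝ) + n1)) := by
        rw [nsmul_eq_mul, Finset.card_univ, Fintype.card_prod, Nat.cast_mul]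
      rw [h]
      refine Finset.sum_le_card_nsmul _ _ _ fun p _ => ?_
      refine sqrt_mono (by positivity) (by positivity) ?_ ?_ <;>
        exact add_le_add (Nat.cast_le.2 (degree_le_maxDegree _ _)) le_rfl
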